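/- Assume K∩L is nonempty and Z ≠ ∅. Then for every r > 0 there exists κ > 0 such that for every x ∈ ℝⁿ with dist(x, Z) ≤ r and every w ∈ T_f(x), one has dist(x, Z) ≤ κ‖w‖. -/

import Mathlib

open RealInnerProductSpace

variable {n : ℕ}

/-- The box `K = {x | l ≤ x ≤ u}`. -/
def boxK (l u : EuclideanSpace ℝ (Fin n)) : Set (EuclideanSpace ℝ (Fin n)) :=
  {x | ∀ i, l i ≤ x i ∧ x i ≤ u i}

/-- The hyperplane `L = {x | ⟪a,x⟫ = d}`. -/
def hypL (a : EuclideanSpace ℝ (Fin n)) (d : ℝ) : Set (EuclideanSpace ℝ (Fin n)) :=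
  {x | ⟪a, x⟫ = d}

/-- The normal cone of `K ∩ L` at `x` (empty if `x ∉ K ∩ L`). -/
def normalCone (l u a : EuclideanSpace ℝ (Fin n)) (d : ℝ) (x : EuclideanSpace ℝ (Fin n)) :
    Set (EuclideanSpace ℝ (Fin n)) :=
  {v | x ∈ boxK l u ∩ hypL a d ∧ ∀ z ∈ boxK l u ∩ hypL a d, ⟪v, z - x⟫ ≤ 0}

/-- The set-valued map `T_f(x) = Qx + c + N_{K∩L}(x)`. -/
def Tf (l u a : EuclideanSpace ℝ (Fin n)) (d : ℝ) (Q : Matrix (Fin n) (Fin n) ℝ)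
    (c : EuclideanSpace ℝ (Fin n)) (x : EuclideanSpace ℝ (Fin n)) :
    Set (EuclideanSpace ℝ (Fin n)) :=
  {w | ∃ v ∈ normalCone l u a d x, w = Matrix.toEuclideanLin Q x + c + v}

/-- The solution set `Z = T_f⁻¹(0)`. -/
def solSet (l u a : EuclideanSpace ℝ (Fin n)) (d : ℝ) (Q : Matrix (Fin n) (Fin n) ℝ)
    (c : EuclideanSpace ℝ (Fin n)) : Set (EuclideanSpace ℝ (Fin n)) :=
  {x | (0 : EuclideanSpace ℝ (Fin n)) ∈ Tf l u a d Q c x}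

/-! ### Auxiliary lemmas -/

section Aux

lemma seb_inner_toE (Q : Matrix (Fin n) (Fin n) ℝ) (x y : EuclideanSpace ℝ (Fin n)) :
    ⟪x, Matrix.toEuclideanLin Q y⟫ = dotProduct x (Q.mulVec y) := by
  rw [EuclideanSpace.inner_eq_star_dotProduct, dotProduct_comm]; rfl

lemma seb_toE_symm {Q : Matrix (Fin n) (Fin n) ℝ} (hQ : Q.IsHermitian)
    (x y : EuclideanSpace ℝ (Fin n)) :
    ⟪Matrix.toEuclideanLin Q x, y⟫ = ⟪x, Matrix.toEuclideanLin Q y⟫ := by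
  rw [real_inner_comm, seb_inner_toE, seb_inner_toE, Matrix.dotProduct_mulVec,
    ← Matrix.mulVec_transpose, dotProduct_comm]
  rw [show Q.transpose = Q by simpa [Matrix.IsHermitian] using hQ]

lemma seb_toE_nonneg {Q : Matrix (Fin n) (Fin n) ℝ} (hQ : Q.PosSemidef)
    (x : EuclideanSpace ℝ (Fin n)) : 0 ≤ ⟪x, Matrix.toEuclideanLin Q x⟫ := by
  rw [seb_inner_toE]; simpa using hQ.dotProduct_mulVec_nonneg x

lemma seb_toE_zero {Q : Matrix (Fin n) (Fin n) ℝ} (hQ : Q.PosSemidef)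
    {x : EuclideanSpace ℝ (Fin n)} (hx : ⟪x, Matrix.toEuclideanLin Q x⟫ = 0) :
    Matrix.toEuclideanLin Q x = 0 := by
  have key : ∀ y : EuclideanSpace ℝ (Fin n), ⟪x, Matrix.toEuclideanLin Q y⟫ = 0 := by
    intro y
    by_contra hB
    set B := ⟪x, Matrix.toEuclideanLin Q y⟫ with hBdef
    have h1 : ∀ t : ℝ, 0 ≤ ⟪y, Matrix.toEuclideanLin Q y⟫ + 2 * t * B := by
      intro t
      have h0 := seb_toE_nonneg hQ (y + t • x)
      have e1 : ⟪y, Matrix.toEuclideanLin Q x⟫ = B := by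
        rw [hBdef, ← seb_toE_symm hQ.1, real_inner_comm]
      simp only [map_add, map_smul, inner_add_left, inner_add_right, inner_smul_left,
        inner_smul_right, RCLike.star_def, conj_trivial, hx, e1] at h0
      nlinarith [h0]
    have h2 := h1 (-(⟪y, Matrix.toEuclideanLin Q y⟫ + 1) / (2 * B))
    have he : 2 * (-(⟪y, Matrix.toEuclideanLin Q y⟫ + 1) / (2 * B)) * B
        = -(⟪y, Matrix.toEuclideanLin Q y⟫ + 1) := by
      field_simp
    rw [he] at h2
    linarith
  have h3 : ⟪Matrix.toEuclideanLin Q x, Matrix.toEuclideanLin Q x⟫ = 0 := by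
    rw [seb_toE_symm hQ.1]; exact key _
  exact inner_self_eq_zero.1 h3

/-- The objective function. -/
noncomputable def seb_qf (Q : Matrix (Fin n) (Fin n) ℝ) (c x : EuclideanSpace ℝ (Fin n)) : ℝ :=
  ⟪x, Matrix.toEuclideanLin Q x⟫ / 2 + ⟪c, x⟫

lemma seb_qf_expand {Q : Matrix (Fin n) (Fin n) ℝ} (hQ : Q.IsHermitian)
    (c x h : EuclideanSpace ℝ (Fin n)) :
    seb_qf Q c (x + h) = seb_qf Q c x + ⟪Matrix.toEuclideanLin Q x + c, h⟫
      + ⟪h, Matrix.toEuclideanLin Q h⟫ / 2 := by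
  have e1 : ⟪h, Matrix.toEuclideanLin Q x⟫ = ⟪x, Matrix.toEuclideanLin Q h⟫ := by
    rw [← seb_toE_symm hQ, real_inner_comm]
  have e2 : ⟪Matrix.toEuclideanLin Q x, h⟫ = ⟪x, Matrix.toEuclideanLin Q h⟫ := seb_toE_symm hQ x h
  simp only [seb_qf, map_add, inner_add_left, inner_add_right, e1, e2]
  ring

lemma seb_convex {l u a : EuclideanSpace ℝ (Fin n)} {dd : ℝ} :
    Convex ℝ (boxK l u ∩ hypL a dd) := by
  apply Convex.inter
  · intro x hx y hy α β hα hβ hαβ i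
    have hxi := hx i
    have hyi := hy i
    have hco : (α • x + β • y) i = α * x i + β * y i := rfl
    have hl : α * l i + β * l i = l i := by linear_combination (l i) * hαβ
    have hu : α * u i + β * u i = u i := by linear_combination (u i) * hαβ
    constructor
    · rw [hco]
      nlinarith [mul_le_mul_of_nonneg_left hxi.1 hα, mul_le_mul_of_nonneg_left hyi.1 hβ]
    · rw [hco]
      nlinarith [mul_le_mul_of_nonneg_left hxi.2 hα, mul_le_mul_of_nonneg_left hyi.2 hβ]
  · intro x hx y hy α β hα hβ hαβ
    simp only [hypL, Set.mem_setOf_eq] at hx hy ⊢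
    rw [inner_add_right, real_inner_smul_right, real_inner_smul_right, hx, hy]
    linear_combination dd * hαβ

lemma seb_mem_solSet_iff {l u a : EuclideanSpace ℝ (Fin n)} {dd : ℝ}
    {Q : Matrix (Fin n) (Fin n) ℝ} {c x : EuclideanSpace ℝ (Fin n)} :
    x ∈ solSet l u a dd Q c ↔ x ∈ boxK l u ∩ hypL a dd ∧
      ∀ p ∈ boxK l u ∩ hypL a dd, 0 ≤ ⟪Matrix.toEuclideanLin Q x + c, p - x⟫ := by
  constructor
  · rintro ⟨v, ⟨hxS, hv⟩, h0⟩
    refine ⟨hxS, fun p hp => ?_⟩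
    have hv' : v = -(Matrix.toEuclideanLin Q x + c) :=
      eq_neg_of_add_eq_zero_left (by rw [add_comm] at h0; exact h0.symm)
    have := hv p hp
    rw [hv'] at this
    rw [inner_neg_left] at this
    linarith
  · rintro ⟨hxS, hVI⟩
    refine ⟨-(Matrix.toEuclideanLin Q x + c), ⟨hxS, fun p hp => ?_⟩, by abel⟩
    rw [inner_neg_left]
    linarith [hVI p hp]

end Aux

section Aux2

variable {l u a : EuclideanSpace ℝ (Fin n)} {dd : ℝ}
  {Q : Matrix (Fin n) (Fin n) ℝ} {c : EuclideanSpace ℝ (Fin n)}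

/-- A solution is a global minimizer of `qf` over `K ∩ L`. -/
lemma seb_sol_min (hQ : Q.PosSemidef) {z : EuclideanSpace ℝ (Fin n)}
    (hz : z ∈ solSet l u a dd Q c) :
    ∀ p ∈ boxK l u ∩ hypL a dd, seb_qf Q c z ≤ seb_qf Q c p := by
  intro p hp
  obtain ⟨hzS, hVI⟩ := seb_mem_solSet_iff.1 hz
  have := seb_qf_expand hQ.1 c z (p - z)
  rw [add_sub_cancel] at this
  rw [this]
  have h1 := hVI p hp
  have h2 := seb_toE_nonneg hQ (p - z)
  linarith

/-- A global minimizer over `K ∩ L` is a solution. -/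
lemma seb_min_sol (hQ : Q.PosSemidef) {x : EuclideanSpace ℝ (Fin n)}
    (hxS : x ∈ boxK l u ∩ hypL a dd)
    (hmin : ∀ p ∈ boxK l u ∩ hypL a dd, seb_qf Q c x ≤ seb_qf Q c p) :
    x ∈ solSet l u a dd Q c := by
  rw [seb_mem_solSet_iff]
  refine ⟨hxS, fun p hp => ?_⟩
  set B := ⟪Matrix.toEuclideanLin Q x + c, p - x⟫ with hB
  set C := ⟪p - x, Matrix.toEuclideanLin Q (p - x)⟫ / 2 with hC
  have hCnn : 0 ≤ C := by
    rw [hC]; linarith [seb_toE_nonneg hQ (p - x)]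
  by_contra hneg
  push_neg at hneg
  -- for each t ∈ (0,1], x + t • (p - x) ∈ K ∩ L and so 0 ≤ t*B + t^2*C
  have key : ∀ t : ℝ, 0 < t → t ≤ 1 → 0 ≤ t * B + t ^ 2 * C := by
    intro t ht0 ht1
    have hmem : x + t • (p - x) ∈ boxK l u ∩ hypL a dd := by
      have := seb_convex (l := l) (u := u) (a := a) (dd := dd)
        hxS hp (by linarith : (0:ℝ) ≤ 1 - t) ht0.le (by ring)
      convert this using 1
      rw [smul_sub]
      module
    have := hmin _ hmem
    have hex := seb_qf_expand hQ.1 c x (t • (p - x))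
    rw [hex, inner_smul_right, map_smul, inner_smul_left, inner_smul_right] at this
    simp only [starRingEnd_apply, star_trivial] at this
    rw [hB, hC]
    nlinarith [this]
  set t := min 1 (-B / (2 * C + 1)) with htdef
  have ht0 : 0 < t := lt_min one_pos (div_pos (by linarith) (by linarith))
  have ht := key t ht0 (min_le_left _ _)
  have htle : t ≤ -B / (2 * C + 1) := min_le_right _ _
  have htC : t * C ≤ -B / 2 := by
    have h1 : t * C ≤ (-B / (2 * C + 1)) * C :=
      mul_le_mul_of_nonneg_right htle hCnn
    have h2 : (-B / (2 * C + 1)) * C ≤ -B / 2 := by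
      rw [div_mul_eq_mul_div, div_le_div_iff₀ (by linarith) (by norm_num)]
      nlinarith
    linarith
  nlinarith [ht, ht0, htC]

/-- `Q` (as a linear map) is constant on the solution set. -/
lemma seb_Q_const (hQ : Q.PosSemidef) {z z' : EuclideanSpace ℝ (Fin n)}
    (hz : z ∈ solSet l u a dd Q c) (hz' : z' ∈ solSet l u a dd Q c) :
    Matrix.toEuclideanLin Q z = Matrix.toEuclideanLin Q z' := by
  have hzS := (seb_mem_solSet_iff.1 hz).1
  have hz'S := (seb_mem_solSet_iff.1 hz').1
  have hqq : seb_qf Q c z = seb_qf Q c z' :=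
    le_antisymm (seb_sol_min hQ hz z' hz'S) (seb_sol_min hQ hz' z hzS)
  have hmem : z + (1/2 : ℝ) • (z' - z) ∈ boxK l u ∩ hypL a dd := by
    have := seb_convex (l := l) (u := u) (a := a) (dd := dd)
      hzS hz'S (by norm_num : (0:ℝ) ≤ 1/2) (by norm_num : (0:ℝ) ≤ 1/2) (by norm_num)
    convert this using 1
    rw [smul_sub]
    module
  have e1 := seb_qf_expand hQ.1 c z ((1/2 : ℝ) • (z' - z))
  have e2 := seb_qf_expand hQ.1 c z (z' - z)
  rw [add_sub_cancel] at e2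
  rw [inner_smul_right, map_smul, inner_smul_left, inner_smul_right] at e1
  simp only [starRingEnd_apply, star_trivial] at e1
  have hmin1 := seb_sol_min hQ hz _ hmem
  rw [e1] at hmin1
  have hq0 : ⟪z' - z, Matrix.toEuclideanLin Q (z' - z)⟫ = 0 := by
    have hnn := seb_toE_nonneg hQ (z' - z)
    nlinarith [hmin1, e2, hqq]
  have hz0 := seb_toE_zero hQ hq0
  rw [map_sub, sub_eq_zero] at hz0
  exact hz0.symm

end Aux2

section Aux3

variable {l u a : EuclideanSpace ℝ (Fin n)} {dd : ℝ}
  {Q : Matrix (Fin n) (Fin n) ℝ} {c : EuclideanSpace ℝ (Fin n)}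

lemma seb_boxK_closed : IsClosed (boxK l u) := by
  have : boxK l u = ⋂ i, {x : EuclideanSpace ℝ (Fin n) | l i ≤ x i ∧ x i ≤ u i} := by
    ext x; simp [boxK, Set.mem_iInter]
  rw [this]
  refine isClosed_iInter fun i => IsClosed.inter ?_ ?_
  · exact isClosed_le continuous_const (EuclideanSpace.proj i).continuous
  · exact isClosed_le (EuclideanSpace.proj i).continuous continuous_const

lemma seb_hypL_closed : IsClosed (hypL a dd) :=
  isClosed_eq (Continuous.inner continuous_const continuous_id) continuous_const

lemma seb_solSet_closed : IsClosed (solSet l u a dd Q c) := by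
  have hrep : solSet l u a dd Q c = (boxK l u ∩ hypL a dd) ∩
      ⋂ p ∈ boxK l u ∩ hypL a dd,
        {x | 0 ≤ ⟪Matrix.toEuclideanLin Q x + c, p - x⟫} := by
    ext x
    rw [seb_mem_solSet_iff]
    simp [Set.mem_iInter]
  rw [hrep]
  refine IsClosed.inter (seb_boxK_closed.inter seb_hypL_closed) ?_
  refine isClosed_biInter fun p _ => isClosed_le continuous_const ?_
  exact Continuous.inner
    (((Matrix.toEuclideanLin Q).continuous_of_finiteDimensional).add continuous_const)
    (continuous_const.sub continuous_id)

lemma seb_apply_add_smul (p q : EuclideanSpace ℝ (Fin n)) (s : ℝ) (i : Fin n) :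
    (p + s • q) i = p i + s * q i := rfl

lemma seb_apply_smul_sub (s : ℝ) (p q : EuclideanSpace ℝ (Fin n)) (i : Fin n) :
    (s • (p - q)) i = s * (p i - q i) := rfl

end Aux3

set_option maxHeartbeats 1000000 in
/-- Semilocal error bound: for every radius `r > 0` there is `κ > 0` such that
`dist(x, Z) ≤ κ ‖w‖` for every `x` with `dist(x, Z) ≤ r` and every `w ∈ T_f(x)`. -/
theorem Tf_semilocal_error_bound (hn : 1 ≤ n)
    (l u a : EuclideanSpace ℝ (Fin n)) (hlu : ∀ i, l i < u i) (d : ℝ)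
    (Q : Matrix (Fin n) (Fin n) ℝ) (hQ : Q.PosSemidef)
    (c : EuclideanSpace ℝ (Fin n))
    (hne : (boxK l u ∩ hypL a d).Nonempty)
    (hZ : (solSet l u a d Q c).Nonempty) :
    ∀ r > (0 : ℝ), ∃ κ > (0 : ℝ),
      ∀ x : EuclideanSpace ℝ (Fin n), Metric.infDist x (solSet l u a d Q c) ≤ r →
        ∀ w ∈ Tf l u a d Q c x,
          Metric.infDist x (solSet l u a d Q c) ≤ κ * ‖w‖ := by
  intro r hr
  by_contra hcon
  push_neg at hcon
  obtain ⟨z₀, hz₀⟩ := hZ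
  have hZcl : IsClosed (solSet l u a d Q c) := seb_solSet_closed
  have hZne : (solSet l u a d Q c).Nonempty := ⟨z₀, hz₀⟩
  have H : ∀ k : ℕ, ∃ x, Metric.infDist x (solSet l u a d Q c) ≤ r ∧
      ∃ w, w ∈ Tf l u a d Q c x ∧
        ((k : ℝ) + 1) * ‖w‖ < Metric.infDist x (solSet l u a d Q c) := by
    intro k
    obtain ⟨x, hx1, w, hw1, hw2⟩ := hcon ((k : ℝ) + 1) (by positivity)
    exact ⟨x, hx1, w, hw1, hw2⟩
  choose x hxr w hwT hlt using H
  have hnear : ∀ k, ∃ z ∈ solSet l u a d Q c,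
      Metric.infDist (x k) (solSet l u a d Q c) = dist (x k) z :=
    fun k => hZcl.exists_infDist_eq_dist hZne (x k)
  choose z hzZ hzd using hnear
  set t : ℕ → ℝ := fun k => Metric.infDist (x k) (solSet l u a d Q c) with htdef
  have ht0 : ∀ k, 0 < t k := fun k =>
    lt_of_le_of_lt (mul_nonneg (by positivity) (norm_nonneg _)) (hlt k)
  have htr : ∀ k, t k ≤ r := hxr
  have htx : ∀ k, t k = ‖x k - z k‖ := fun k => (hzd k).trans (dist_eq_norm _ _)
  set dv : ℕ → EuclideanSpace ℝ (Fin n) := fun k => (t k)⁻¹ • (x k - z k) with hdvdef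
  have hdvnorm : ∀ k, ‖dv k‖ = 1 := by
    intro k
    rw [hdvdef]
    simp only [norm_smul, Real.norm_eq_abs, abs_of_pos (inv_pos.2 (ht0 k)), ← htx k]
    rw [inv_mul_cancel₀ (ht0 k).ne']
  have hxz : ∀ k, x k - z k = (t k) • dv k := by
    intro k
    rw [hdvdef, smul_smul, mul_inv_cancel₀ (ht0 k).ne', one_smul]
  set g := Matrix.toEuclideanLin Q z₀ + c with hgdef
  have hgz : ∀ k, Matrix.toEuclideanLin Q (z k) + c = g := fun k => by
    rw [hgdef, seb_Q_const hQ (hzZ k) hz₀]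
  have hxS : ∀ k, x k ∈ boxK l u ∩ hypL a d := by
    intro k; obtain ⟨v, hv, -⟩ := hwT k; exact hv.1
  have hzS : ∀ k, z k ∈ boxK l u ∩ hypL a d := fun k => (seb_mem_solSet_iff.1 (hzZ k)).1
  have fact1 : ∀ k, 0 ≤ ⟪g, x k - z k⟫ := by
    intro k
    have h := (seb_mem_solSet_iff.1 (hzZ k)).2 (x k) (hxS k)
    rwa [hgz k] at h
  have fact2 : ∀ k, ⟪g, x k - z k⟫
      + ⟪x k - z k, Matrix.toEuclideanLin Q (x k - z k)⟫ ≤ ‖w k‖ * t k := by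
    intro k
    obtain ⟨v, ⟨hvS, hv⟩, hweq⟩ := hwT k
    have h1 : ⟪v, z k - x k⟫ ≤ 0 := hv (z k) (hzS k)
    have h1' : 0 ≤ ⟪v, x k - z k⟫ := by
      have : ⟪v, x k - z k⟫ = -⟪v, z k - x k⟫ := by
        rw [← inner_neg_right]; congr 1; abel
      linarith [this]
    have h2 : ⟪Matrix.toEuclideanLin Q (x k) + c, x k - z k⟫ ≤ ⟪w k, x k - z k⟫ := by
      rw [hweq]
      have e : ⟪Matrix.toEuclideanLin Q (x k) + c + v, x k - z k⟫
          = ⟪Matrix.toEuclideanLin Q (x k) + c, x k - z k⟫ + ⟪v, x k - z k⟫ :=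
        inner_add_left _ _ _
      rw [e]
      linarith
    have h3 : Matrix.toEuclideanLin Q (x k) + c
        = g + Matrix.toEuclideanLin Q (x k - z k) := by
      rw [← hgz k, map_sub]; abel
    have h4 : ⟪w k, x k - z k⟫ ≤ ‖w k‖ * t k := by
      rw [htx k]; exact real_inner_le_norm _ _
    rw [h3, inner_add_left] at h2
    have h5 : ⟪Matrix.toEuclideanLin Q (x k - z k), x k - z k⟫
        = ⟪x k - z k, Matrix.toEuclideanLin Q (x k - z k)⟫ := real_inner_comm _ _
    linarith [h2, h4, h5 ▸ h2]
  have hwt : ∀ k, ‖w k‖ * t k < t k * t k / ((k : ℝ) + 1) := by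
    intro k
    have h := hlt k
    rw [lt_div_iff₀ (by positivity : (0:ℝ) < (k:ℝ) + 1)]
    calc ‖w k‖ * t k * ((k:ℝ) + 1) = (((k:ℝ) + 1) * ‖w k‖) * t k := by ring
    _ < t k * t k := by
        exact mul_lt_mul_of_pos_right h (ht0 k)
  have fact2a : ∀ k, ⟪g, x k - z k⟫ ≤ ‖w k‖ * t k := fun k => by
    linarith [fact2 k, seb_toE_nonneg hQ (x k - z k)]
  have fact2b : ∀ k, ⟪x k - z k, Matrix.toEuclideanLin Q (x k - z k)⟫ ≤ ‖w k‖ * t k :=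
    fun k => by linarith [fact2 k, fact1 k]
  -- scaled estimates
  have sc1 : ∀ k, 0 ≤ ⟪g, dv k⟫ := by
    intro k
    rw [hdvdef, inner_smul_right]
    exact mul_nonneg (inv_pos.2 (ht0 k)).le (fact1 k)
  have sc1' : ∀ k, ⟪g, dv k⟫ ≤ r / ((k:ℝ) + 1) := by
    intro k
    rw [hdvdef, inner_smul_right]
    have h1 : (t k)⁻¹ * ⟪g, x k - z k⟫ ≤ (t k)⁻¹ * (t k * t k / ((k:ℝ)+1)) := by
      apply mul_le_mul_of_nonneg_left _ (inv_pos.2 (ht0 k)).le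
      linarith [fact2a k, hwt k]
    have h2 : (t k)⁻¹ * (t k * t k / ((k:ℝ)+1)) = t k / ((k:ℝ)+1) := by
      field_simp
    have h3 : t k / ((k:ℝ)+1) ≤ r / ((k:ℝ)+1) := by gcongr; exact htr k
    linarith [h1, h2 ▸ h1, h3]
  have sc2 : ∀ k, 0 ≤ ⟪dv k, Matrix.toEuclideanLin Q (dv k)⟫ :=
    fun k => seb_toE_nonneg hQ (dv k)
  have sc2' : ∀ k, ⟪dv k, Matrix.toEuclideanLin Q (dv k)⟫ ≤ 1 / ((k:ℝ) + 1) := by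
    intro k
    have hqe : ⟪dv k, Matrix.toEuclideanLin Q (dv k)⟫
        = (t k)⁻¹ * ((t k)⁻¹ * ⟪x k - z k, Matrix.toEuclideanLin Q (x k - z k)⟫) := by
      rw [hdvdef, map_smul, inner_smul_left, inner_smul_right]
      simp [starRingEnd_apply]
    rw [hqe]
    have hb : ⟪x k - z k, Matrix.toEuclideanLin Q (x k - z k)⟫ ≤ t k * t k / ((k:ℝ)+1) := by
      linarith [fact2b k, hwt k]
    have h1 : (t k)⁻¹ * ((t k)⁻¹ * ⟪x k - z k, Matrix.toEuclideanLin Q (x k - z k)⟫)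
        ≤ (t k)⁻¹ * ((t k)⁻¹ * (t k * t k / ((k:ℝ)+1))) := by
      apply mul_le_mul_of_nonneg_left _ (inv_pos.2 (ht0 k)).le
      exact mul_le_mul_of_nonneg_left hb (inv_pos.2 (ht0 k)).le
    have h2 : (t k)⁻¹ * ((t k)⁻¹ * (t k * t k / ((k:ℝ)+1))) = 1 / ((k:ℝ)+1) := by
      field_simp [(ht0 k).ne']
    linarith [h1, h2 ▸ h1]
  have hadv : ∀ k, ⟪a, dv k⟫ = 0 := by
    intro k
    rw [hdvdef, inner_smul_right, inner_sub_right, (hxS k).2, (hzS k).2]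
    ring
  -- extract a convergent subsequence of the unit directions
  have hdvmem : ∀ k, dv k ∈ Metric.sphere (0 : EuclideanSpace ℝ (Fin n)) 1 := by
    intro k
    simp [Metric.mem_sphere, dist_eq_norm, hdvnorm k]
  obtain ⟨dlim, hdsphere, φ, hφ, hdtend⟩ :=
    (isCompact_sphere (0 : EuclideanSpace ℝ (Fin n)) 1).tendsto_subseq hdvmem
  have hdnorm : ‖dlim‖ = 1 := by
    simpa [Metric.mem_sphere, dist_eq_norm] using hdsphere
  -- limits along the subsequence
  have hone : Filter.Tendsto (fun k : ℕ => 1 / ((k:ℝ) + 1)) Filter.atTop (nhds 0) :=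
    tendsto_one_div_add_atTop_nhds_zero_nat
  have hφge : ∀ k : ℕ, (k : ℝ) ≤ (φ k : ℝ) := fun k => Nat.cast_le.2 hφ.le_apply
  have hmono : ∀ k : ℕ, (1:ℝ) / (↑(φ k) + 1) ≤ 1 / (↑k + 1) := fun k =>
    one_div_le_one_div_of_le (by positivity) (by push_cast; linarith [hφge k])
  have hgd : ⟪g, dlim⟫ = 0 := by
    have htt : Filter.Tendsto (fun k => ⟪g, dv (φ k)⟫) Filter.atTop (nhds ⟪g, dlim⟫) :=
      Filter.Tendsto.inner tendsto_const_nhds hdtend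
    have hG : Filter.Tendsto (fun k : ℕ => r / ((k:ℝ) + 1)) Filter.atTop (nhds 0) := by
      simpa [mul_one_div, div_eq_mul_inv] using hone.const_mul r
    have hsq : Filter.Tendsto (fun k => ⟪g, dv (φ k)⟫) Filter.atTop (nhds 0) := by
      refine squeeze_zero (fun k => sc1 (φ k)) (fun k => le_trans (sc1' (φ k)) ?_) hG
      rw [div_eq_mul_one_div, div_eq_mul_one_div r]
      exact mul_le_mul_of_nonneg_left (hmono k) hr.le
    exact tendsto_nhds_unique htt hsq
  have hqd : ⟪dlim, Matrix.toEuclideanLin Q dlim⟫ = 0 := by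
    have hQcont : Continuous fun y : EuclideanSpace ℝ (Fin n) => Matrix.toEuclideanLin Q y :=
      (Matrix.toEuclideanLin Q).continuous_of_finiteDimensional
    have htt : Filter.Tendsto (fun k => ⟪dv (φ k), Matrix.toEuclideanLin Q (dv (φ k))⟫)
        Filter.atTop (nhds ⟪dlim, Matrix.toEuclideanLin Q dlim⟫) :=
      Filter.Tendsto.inner hdtend ((hQcont.tendsto dlim).comp hdtend)
    have hsq : Filter.Tendsto (fun k => ⟪dv (φ k), Matrix.toEuclideanLin Q (dv (φ k))⟫)
        Filter.atTop (nhds 0) := by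
      exact squeeze_zero (fun k => sc2 (φ k)) (fun k => le_trans (sc2' (φ k)) (hmono k)) hone
    exact tendsto_nhds_unique htt hsq
  have hQd : Matrix.toEuclideanLin Q dlim = 0 := seb_toE_zero hQ hqd
  have had : ⟪a, dlim⟫ = 0 := by
    have htt : Filter.Tendsto (fun k => ⟪a, dv (φ k)⟫) Filter.atTop (nhds ⟪a, dlim⟫) :=
      Filter.Tendsto.inner tendsto_const_nhds hdtend
    have : Filter.Tendsto (fun k => ⟪a, dv (φ k)⟫) Filter.atTop (nhds 0) := by
      have he : (fun k => ⟪a, dv (φ k)⟫) = fun _ : ℕ => (0:ℝ) := funext fun k => hadv (φ k)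
      rw [he]
      exact tendsto_const_nhds
    exact tendsto_nhds_unique htt this
  -- coordinatewise eventual bounds
  have hcoord : ∀ i : Fin n, Filter.Tendsto (fun k => dv (φ k) i) Filter.atTop (nhds (dlim i)) :=
    fun i => ((EuclideanSpace.proj (𝕜 := ℝ) i).continuous.tendsto dlim).comp hdtend
  have hev : ∀ i : Fin n, ∀ᶠ k in Filter.atTop,
      (0 < dlim i → dlim i / 2 ≤ dv (φ k) i) ∧ (dlim i < 0 → dv (φ k) i ≤ dlim i / 2) := by
    intro i
    rcases lt_trichotomy (dlim i) 0 with h | h | h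
    · have := (hcoord i).eventually_lt_const (show dlim i < dlim i / 2 by linarith)
      filter_upwards [this] with k hk
      exact ⟨fun h' => absurd h' (by linarith), fun _ => hk.le⟩
    · filter_upwards with k
      exact ⟨fun h' => absurd h' (by linarith), fun h' => absurd h' (by linarith)⟩
    · have := (hcoord i).eventually_const_lt (show dlim i / 2 < dlim i by linarith)
      filter_upwards [this] with k hk
      exact ⟨fun _ => hk.le, fun h' => absurd h' (by linarith)⟩
  obtain ⟨N₁, hN₁⟩ := Filter.eventually_atTop.1 (Filter.eventually_all.2 hev)
  obtain ⟨N₂, hN₂⟩ := (Metric.tendsto_atTop.1 hdtend) (1/4) (by norm_num)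
  set K := max N₁ N₂ with hKdef
  set m := φ K with hmdef
  have hci : ∀ i : Fin n,
      (0 < dlim i → dlim i / 2 ≤ dv m i) ∧ (dlim i < 0 → dv m i ≤ dlim i / 2) :=
    hN₁ K (le_max_left _ _)
  have hd4 : ‖dv m - dlim‖ < 1/4 := by
    have := hN₂ K (le_max_right _ _)
    rwa [dist_eq_norm] at this
  -- the comparison point y
  set y : EuclideanSpace ℝ (Fin n) := z m + (t m / 2) • dlim with hydef
  have hcoxz : ∀ i, x m i - z m i = t m * dv m i := by
    intro i
    have h1 := congrArg (fun v : EuclideanSpace ℝ (Fin n) => v i) (hxz m)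
    simp only at h1
    rw [show (x m - z m) i = x m i - z m i from rfl] at h1
    rw [h1, show (t m • dv m) i = t m * dv m i from rfl]
  have hyS : y ∈ boxK l u ∩ hypL a d := by
    constructor
    · intro i
      have hyi : y i = z m i + (t m / 2) * dlim i := seb_apply_add_smul _ _ _ _
      have hxi := (hxS m).1 i
      have hzi := (hzS m).1 i
      have hxzi := hcoxz i
      constructor
      · rw [hyi]
        rcases le_or_gt 0 (dlim i) with h | h
        · nlinarith [hzi.1, (ht0 m).le]
        · have := (hci i).2 h
          nlinarith [hxi.1, ht0 m]
      · rw [hyi]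
        rcases le_or_gt (dlim i) 0 with h | h
        · nlinarith [hzi.2, (ht0 m).le]
        · have := (hci i).1 h
          nlinarith [hxi.2, ht0 m]
    · show ⟪a, y⟫ = d
      rw [hydef, inner_add_right, real_inner_smul_right, had, (hzS m).2]
      ring
  have hyq : seb_qf Q c y = seb_qf Q c (z m) := by
    rw [hydef, seb_qf_expand hQ.1, hgz m]
    rw [inner_smul_right, map_smul, inner_smul_left, inner_smul_right]
    simp only [starRingEnd_apply, star_trivial]
    rw [hgd, hqd]
    ring
  have hyZ : y ∈ solSet l u a d Q c := by
    refine seb_min_sol hQ hyS fun p hp => ?_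
    rw [hyq]
    exact seb_sol_min hQ (hzZ m) p hp
  -- contradiction
  have hle : t m ≤ dist (x m) y := Metric.infDist_le_dist_of_mem hyZ
  have hxy : x m - y = (t m) • (dv m - (1/2 : ℝ) • dlim) := by
    rw [hydef]
    rw [show x m - (z m + (t m / 2) • dlim) = (x m - z m) - (t m / 2) • dlim by abel]
    rw [hxz m]
    module
  have hnorm1 : ‖dv m - (1/2 : ℝ) • dlim‖ ≤ 3/4 := by
    have hrw : dv m - (1/2 : ℝ) • dlim = (dv m - dlim) + (1/2 : ℝ) • dlim := by module
    rw [hrw]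
    refine le_trans (norm_add_le _ _) ?_
    rw [norm_smul, hdnorm]
    simp only [Real.norm_eq_abs]
    rw [abs_of_pos (by norm_num : (0:ℝ) < 1/2)]
    linarith [hd4]
  have hfinal : dist (x m) y ≤ 3/4 * t m := by
    rw [dist_eq_norm, hxy, norm_smul, Real.norm_eq_abs, abs_of_pos (ht0 m)]
    nlinarith [hnorm1, (ht0 m).le, norm_nonneg (dv m - (1/2 : ℝ) • dlim)]
  have : t m ≤ 3/4 * t m := le_trans hle hfinal
  linarith [ht0 m]
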